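/- Let p be an odd prime, q = p^ν (ν ≥ 1) a power of p, d = q^2+q+1, and k an algebraically closed field of characteristic p. Let h ∈ k[x_0,x_1,x_2] be the polynomial h = x_0^{q+1} + x_1^{q+1} + x_2^{q+1} − x_0^q x_1 − x_0^q x_2 − x_0 x_1^q − x_1^q x_2 − x_0 x_2^q − x_1 x_2^q + (x_0^2 + x_1^2 + x_2^2 − 2x_0x_1 − 2x_1x_2 − 2x_2x_0)^{(q+1)/2}, and define g(x,y) = h(x^d, y+1, 1) ∈ k[x,y]. Then the Milnor number of g equals q^2(q+1), i.e. dim_k k[[x,y]]/(∂g/∂x, ∂g/∂y) = q^2(q+1). (This is the Milnor number of the dual curve of the Fermat curve of degree d at each of its singular points on the coordinate triangle.) -/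

import Mathlib

section DimQuot
open MvPowerSeries Finsupp

variable {k : Type*} [Field k]

private lemma nfun0 (i j : ℕ) : ((single (0:Fin 2) i + single 1 j : Fin 2 →₀ ℕ)) 0 = i := by simp
private lemma nfun1 (i j : ℕ) : ((single (0:Fin 2) i + single 1 j : Fin 2 →₀ ℕ)) 1 = j := by simp

noncomputable def coefmap (k) [Field k] (a b : ℕ) :
    MvPowerSeries (Fin 2) k →ₗ[k] (Fin a × Fin b → k) :=
  LinearMap.pi fun ij => MvPowerSeries.coeff (single 0 (ij.1 : ℕ) + single 1 (ij.2 : ℕ))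

lemma coefmap_surjective (a b : ℕ) : Function.Surjective (coefmap k a b) := by
  intro c
  classical
  refine ⟨fun e => if h : e 0 < a ∧ e 1 < b then c (⟨e 0, h.1⟩, ⟨e 1, h.2⟩) else 0, ?_⟩
  funext ij
  change (fun e : Fin 2 →₀ ℕ => if h : e 0 < a ∧ e 1 < b then c (⟨e 0, h.1⟩, ⟨e 1, h.2⟩) else 0)
    (single 0 (ij.1 : ℕ) + single 1 (ij.2 : ℕ)) = c ij
  beta_reduce
  rw [dif_pos]
  · congr 1 <;> ext <;> simp [nfun0, nfun1]
  · exact ⟨by rw [nfun0]; exact ij.1.2, by rw [nfun1]; exact ij.2.2⟩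

lemma ker_coefmap (a b : ℕ) :
    LinearMap.ker (coefmap k a b) =
      (Ideal.span {(MvPowerSeries.X 0 : MvPowerSeries (Fin 2) k) ^ a,
        (MvPowerSeries.X 1 : MvPowerSeries (Fin 2) k) ^ b}).restrictScalars k := by
  classical
  ext F
  simp only [LinearMap.mem_ker, Submodule.restrictScalars_mem]
  constructor
  · intro hF
    have hF' : ∀ e : Fin 2 →₀ ℕ, e 0 < a → e 1 < b → F e = 0 := by
      intro e h0 h1
      have := congrFun hF (⟨e 0, h0⟩, ⟨e 1, h1⟩)
      simp only [coefmap, LinearMap.pi_apply, MvPowerSeries.coeff_apply, Pi.zero_apply] at this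
      rw [← this]
      congr 1
      ext i
      fin_cases i <;> simp
    set G1 : MvPowerSeries (Fin 2) k := fun e => F (e + single 0 a) with hG1
    set G2 : MvPowerSeries (Fin 2) k :=
      fun e => if e 0 < a then F (e + single 1 b) else 0 with hG2
    have key : F = (MvPowerSeries.X 0) ^ a * G1 + (MvPowerSeries.X 1) ^ b * G2 := by
      apply MvPowerSeries.ext
      intro e
      rw [map_add, MvPowerSeries.X_pow_eq, MvPowerSeries.X_pow_eq,
        MvPowerSeries.coeff_monomial_mul, MvPowerSeries.coeff_monomial_mul]
      have hsub0 : ∀ (s : Fin 2) (n : ℕ), ((e - single s n : Fin 2 →₀ ℕ)) 0 = e 0 - (single s n) 0 := by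
        intro s n; simp [Finsupp.coe_tsub]
      by_cases h0 : a ≤ e 0
      · have hz : (if single (1:Fin 2) b ≤ e then
            (1:k) * (MvPowerSeries.coeff (e - single 1 b)) G2 else 0) = 0 := by
          split
          · rw [one_mul, MvPowerSeries.coeff_apply, hG2]
            simp only
            rw [if_neg]
            rw [hsub0 1 b]
            simp only [single_eq_of_ne' (by decide : (1:Fin 2) ≠ 0)]
            omega
          · rfl
        rw [hz, add_zero, if_pos (Finsupp.single_le_iff.mpr h0), one_mul,
          MvPowerSeries.coeff_apply, MvPowerSeries.coeff_apply, hG1]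
        simp only
        rw [tsub_add_cancel_of_le (Finsupp.single_le_iff.mpr h0)]
      · rw [if_neg (fun hc => h0 (Finsupp.single_le_iff.mp hc)), zero_add]
        by_cases h1 : b ≤ e 1
        · rw [if_pos (Finsupp.single_le_iff.mpr h1), one_mul,
            MvPowerSeries.coeff_apply, MvPowerSeries.coeff_apply, hG2]
          simp only
          rw [if_pos, tsub_add_cancel_of_le (Finsupp.single_le_iff.mpr h1)]
          rw [hsub0 1 b]
          simp only [single_eq_of_ne' (by decide : (1:Fin 2) ≠ 0)]
          omega
        · rw [if_neg (fun hc => h1 (Finsupp.single_le_iff.mp hc)),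
            MvPowerSeries.coeff_apply, hF' e (by omega) (by omega)]
    rw [key]
    exact add_mem (Ideal.mul_mem_right _ _ (Ideal.subset_span (by simp)))
      (Ideal.mul_mem_right _ _ (Ideal.subset_span (by simp)))
  · intro hF
    rw [Ideal.mem_span_pair] at hF
    obtain ⟨c1, c2, rfl⟩ := hF
    funext ij
    simp only [coefmap, LinearMap.pi_apply, Pi.zero_apply, map_add]
    rw [mul_comm c1, mul_comm c2, MvPowerSeries.X_pow_eq, MvPowerSeries.X_pow_eq,
      MvPowerSeries.coeff_monomial_mul, MvPowerSeries.coeff_monomial_mul,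
      if_neg, if_neg, add_zero]
    · rw [Finsupp.single_le_iff, nfun1]
      have := ij.2.2; omega
    · rw [Finsupp.single_le_iff, nfun0]
      have := ij.1.2; omega

lemma dim_quot (a b : ℕ) :
    Module.finrank k (MvPowerSeries (Fin 2) k ⧸
      Ideal.span {(MvPowerSeries.X 0 : MvPowerSeries (Fin 2) k) ^ a,
        (MvPowerSeries.X 1 : MvPowerSeries (Fin 2) k) ^ b}) = a * b := by
  classical
  set I := Ideal.span {(MvPowerSeries.X 0 : MvPowerSeries (Fin 2) k) ^ a,
        (MvPowerSeries.X 1 : MvPowerSeries (Fin 2) k) ^ b}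
  have e1 : (MvPowerSeries (Fin 2) k ⧸ I) ≃ₗ[k]
      (MvPowerSeries (Fin 2) k ⧸ (Submodule.restrictScalars k I)) :=
    (Submodule.Quotient.restrictScalarsEquiv k I).symm
  have e2 : (MvPowerSeries (Fin 2) k ⧸ (Submodule.restrictScalars k I)) ≃ₗ[k]
      (MvPowerSeries (Fin 2) k ⧸ LinearMap.ker (coefmap k a b)) :=
    Submodule.quotEquivOfEq _ _ (ker_coefmap a b).symm
  have e3 := (coefmap k a b).quotKerEquivOfSurjective (coefmap_surjective a b)
  rw [e1.finrank_eq, e2.finrank_eq, e3.finrank_eq,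
    Module.finrank_fintype_fun_eq_card, Fintype.card_prod, Fintype.card_fin, Fintype.card_fin]

end DimQuot

open MvPolynomial

private lemma aux_ring {R : Type*} [CommRing R] (q m : ℕ) (A Y : R)
    (hBq : (Y + 1) ^ q = Y ^ q + 1) (huq : (A - Y) ^ q = A ^ q - Y ^ q) :
    A ^ (q+1) + (Y+1) ^ (q+1) + 1 ^ (q+1) - A ^ q * (Y+1) - A ^ q * 1 - A * (Y+1) ^ q
      - (Y+1) ^ q * 1 - A * 1 ^ q - (Y+1) * 1 ^ q
      + (A ^ 2 + (Y+1) ^ 2 + 1 ^ 2 - 2 * A * (Y+1) - 2 * (Y+1) * 1 - 2 * 1 * A) ^ m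
    = (A - Y) ^ (q+1) - 2 * A ^ q - 2 * A + ((A - Y) ^ 2 - 4 * A) ^ m := by
  have e : A ^ 2 + (Y+1) ^ 2 + 1 ^ 2 - 2 * A * (Y+1) - 2 * (Y+1) * 1 - 2 * 1 * A
      = (A - Y) ^ 2 - 4 * A := by ring
  rw [e, pow_succ (Y+1) q, pow_succ (A-Y) q, pow_succ A q, hBq, huq]
  ring


open MvPolynomial

/-- Let `p` be an odd prime, `q` a power of `p`, `d = q²+q+1`, `k` algebraically closed
of characteristic `p`, `h` the defining polynomial of the Ballico–Hefez curve, and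
`g(x,y) = h(x^d, y+1, 1)`, a local equation of the dual curve of the Fermat curve of
degree `d` at the singular point `[0:1:1]`. Then the Milnor number of `g`, i.e.
`dim_k k⟦x,y⟧/(∂g/∂x, ∂g/∂y)`, equals `q²(q+1)`. -/
theorem milnor_number_dual_fermat_at_boundary_singularity
    {k : Type*} [Field k] [IsAlgClosed k] (p ν q d : ℕ) (hp : p.Prime) (hp2 : p ≠ 2)
    [CharP k p] (hν : 1 ≤ ν) (hq : q = p ^ ν) (hd : d = q ^ 2 + q + 1)
    (h : MvPolynomial (Fin 3) k)
    (hh : h = X 0 ^ (q + 1) + X 1 ^ (q + 1) + X 2 ^ (q + 1)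
        - X 0 ^ q * X 1 - X 0 ^ q * X 2 - X 0 * X 1 ^ q
        - X 1 ^ q * X 2 - X 0 * X 2 ^ q - X 1 * X 2 ^ q
        + (X 0 ^ 2 + X 1 ^ 2 + X 2 ^ 2
            - C 2 * X 0 * X 1 - C 2 * X 1 * X 2 - C 2 * X 2 * X 0) ^ ((q + 1) / 2))
    (g : MvPolynomial (Fin 2) k)
    (hg : g = aeval ![(X 0 : MvPolynomial (Fin 2) k) ^ d, X 1 + 1, 1] h) :
    Module.finrank k
        (MvPowerSeries (Fin 2) k ⧸
          Ideal.span {((pderiv 0 g : MvPolynomial (Fin 2) k) : MvPowerSeries (Fin 2) k),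
            ((pderiv 1 g : MvPolynomial (Fin 2) k) : MvPowerSeries (Fin 2) k)}) =
      q ^ 2 * (q + 1) := by
  -- numeric facts
  haveI : Fact p.Prime := ⟨hp⟩
  have hoddp : Odd p := hp.odd_of_ne_two hp2
  have hoddq : Odd q := hq ▸ hoddp.pow
  have hp3 : 3 ≤ p := by have := hp.two_le; omega
  have hq3 : 3 ≤ q := le_trans hp3 (hq ▸ Nat.le_self_pow (by omega) p)
  set m := (q + 1) / 2 with hm
  have h2m : m * 2 = q + 1 := Nat.div_mul_cancel hoddq.add_one.two_dvd
  have hm2 : 2 ≤ m := by omega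
  have hd4 : 4 ≤ d := by nlinarith
  -- char facts in k
  have hqk : (q : k) = 0 := by
    rw [hq]; push_cast [CharP.cast_eq_zero k p]; exact zero_pow (by omega)
  have hdk : (d : k) = 1 := by rw [hd]; push_cast [hqk]; ring
  have h2k : (2 : k) ≠ 0 := by
    intro hc
    have h2 := (CharP.cast_eq_zero_iff k p 2).mp (by exact_mod_cast hc)
    have := Nat.le_of_dvd (by norm_num) h2
    omega
  have hmk : (m : k) * 2 = 1 := by
    have : ((m * 2 : ℕ) : k) = ((q + 1 : ℕ) : k) := by rw [h2m]
    push_cast [hqk] at this; linear_combination this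
  -- the explicit form of g
  have key1 : g = ((X 0 : MvPolynomial (Fin 2) k)^d - X 1)^(q+1)
      - 2*((X 0 : MvPolynomial (Fin 2) k) ^ d)^q - 2*((X 0: MvPolynomial (Fin 2) k)^d)
      + (((X 0 : MvPolynomial (Fin 2) k)^d - X 1)^2 - 4*((X 0 : MvPolynomial (Fin 2) k)^d))^m := by
    rw [hg, hh]
    simp only [map_add, map_sub, map_mul, map_pow, map_one, aeval_X, aeval_C,
      Matrix.cons_val_zero, Matrix.cons_val_one, Matrix.head_cons, Matrix.cons_val_two,
      Matrix.tail_cons, map_ofNat]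
    exact aux_ring q m _ _
      (by rw [hq]; rw [add_pow_char_pow, one_pow])
      (by rw [hq]; rw [sub_pow_char_pow])
  have h2C : (2 : MvPolynomial (Fin 2) k) = C 2 := (map_ofNat C 2).symm
  have h4C : (4 : MvPolynomial (Fin 2) k) = C 4 := (map_ofNat C 4).symm
  have hqR : ((q:ℕ) : MvPolynomial (Fin 2) k) = 0 := by
    rw [← C_eq_coe_nat, hqk, map_zero]
  have hdR : ((d:ℕ) : MvPolynomial (Fin 2) k) = 1 := by
    rw [← C_eq_coe_nat, hdk, map_one]
  have hmR : ((m:ℕ) : MvPolynomial (Fin 2) k) * 2 = 1 := by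
    have := congrArg (C : k → MvPolynomial (Fin 2) k) hmk
    rw [← C_eq_coe_nat]
    rw [map_mul, map_one, map_ofNat] at this; exact this
  have D1 : pderiv 1 g = -(((X 0 : MvPolynomial (Fin 2) k)^d - X 1)^q
      + ((X 0 : MvPolynomial (Fin 2) k)^d - X 1)
        * (((X 0 : MvPolynomial (Fin 2) k)^d - X 1)^2 - 4*((X 0 : MvPolynomial (Fin 2) k)^d))^(m-1)) := by
    rw [key1, h2C, h4C]
    simp only [map_sub, map_add, pderiv_mul, pderiv_pow, pderiv_X_self, pderiv_C_mul,
      pderiv_X_of_ne (show (0:Fin 2) ≠ 1 by decide), pderiv_X_of_ne (show (1:Fin 2) ≠ 0 by decide),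
      pderiv_C, pderiv_one, mul_zero, zero_mul, add_zero, zero_add, mul_one, sub_zero, zero_sub,
      Nat.add_sub_cancel]
    rw [← h4C]
    push_cast [hqR]
    linear_combination (-((X 0 : MvPolynomial (Fin 2) k)^d - X 1)
      * (((X 0 : MvPolynomial (Fin 2) k)^d - X 1)^2 - 4*((X 0 : MvPolynomial (Fin 2) k)^d))^(m-1)) * hmR
  have D0 : pderiv 0 g = (X 0 : MvPolynomial (Fin 2) k)^(d-1)
      * ((((X 0 : MvPolynomial (Fin 2) k)^d - X 1)^q
      + ((X 0 : MvPolynomial (Fin 2) k)^d - X 1)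
        * (((X 0 : MvPolynomial (Fin 2) k)^d - X 1)^2 - 4*((X 0 : MvPolynomial (Fin 2) k)^d))^(m-1))
      - 2 - 2 * (((X 0 : MvPolynomial (Fin 2) k)^d - X 1)^2 - 4*((X 0 : MvPolynomial (Fin 2) k)^d))^(m-1)) := by
    rw [key1, h2C, h4C]
    simp only [map_sub, map_add, pderiv_mul, pderiv_pow, pderiv_X_self, pderiv_C_mul,
      pderiv_X_of_ne (show (0:Fin 2) ≠ 1 by decide), pderiv_X_of_ne (show (1:Fin 2) ≠ 0 by decide),
      pderiv_C, pderiv_one, mul_zero, zero_mul, add_zero, zero_add, mul_one, sub_zero, zero_sub,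
      Nat.add_sub_cancel]
    rw [← h4C, ← h2C]
    push_cast [hqR, hdR]
    linear_combination ((((X 0 : MvPolynomial (Fin 2) k)^d - X 1)
        * (((X 0 : MvPolynomial (Fin 2) k)^d - X 1)^2 - 4*((X 0 : MvPolynomial (Fin 2) k)^d))^(m-1)
        - 2 * (((X 0 : MvPolynomial (Fin 2) k)^d - X 1)^2 - 4*((X 0 : MvPolynomial (Fin 2) k)^d))^(m-1))
        * (X 0 : MvPolynomial (Fin 2) k)^(d-1)) * hmR
  -- divisibility step
  obtain ⟨t, ht⟩ : ∃ t : MvPolynomial (Fin 2) k,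
      (((X 0 : MvPolynomial (Fin 2) k)^d - X 1)^2 - 4*((X 0 : MvPolynomial (Fin 2) k)^d))^(m-1)
      = (((X 0 : MvPolynomial (Fin 2) k)^d - X 1)^2)^(m-1) + (X 0 : MvPolynomial (Fin 2) k)^d * t := by
    have hdvd : ((X 0 : MvPolynomial (Fin 2) k)^d) ∣
        ((((X 0 : MvPolynomial (Fin 2) k)^d - X 1)^2 - 4*((X 0 : MvPolynomial (Fin 2) k)^d))^(m-1)
          - (((X 0 : MvPolynomial (Fin 2) k)^d - X 1)^2)^(m-1)) := by
      have h1 : ((X 0 : MvPolynomial (Fin 2) k)^d) ∣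
          ((((X 0 : MvPolynomial (Fin 2) k)^d - X 1)^2 - 4*((X 0 : MvPolynomial (Fin 2) k)^d))
            - (((X 0 : MvPolynomial (Fin 2) k)^d - X 1)^2)) := ⟨-4, by ring⟩
      exact h1.trans (sub_dvd_pow_sub_pow _ _ (m-1))
    obtain ⟨t, ht⟩ := hdvd
    exact ⟨t, by linear_combination ht⟩
  have key2 : ((X 0 : MvPolynomial (Fin 2) k)^d - X 1)^q
      + ((X 0 : MvPolynomial (Fin 2) k)^d - X 1)
        * (((X 0 : MvPolynomial (Fin 2) k)^d - X 1)^2 - 4*((X 0 : MvPolynomial (Fin 2) k)^d))^(m-1)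
      = -2 * (X 1 : MvPolynomial (Fin 2) k)^q
        + (X 0 : MvPolynomial (Fin 2) k)^d
          * (2*(((X 0 : MvPolynomial (Fin 2) k)^d))^(q-1) + ((X 0 : MvPolynomial (Fin 2) k)^d - X 1) * t) := by
    have e1 : ((X 0 : MvPolynomial (Fin 2) k)^d - X 1)^q
        = ((X 0 : MvPolynomial (Fin 2) k)^d)^q - (X 1 : MvPolynomial (Fin 2) k)^q := by
      rw [hq, sub_pow_char_pow]
    have e2 : ((((X 0 : MvPolynomial (Fin 2) k)^d - X 1)^2)^(m-1)) * ((X 0 : MvPolynomial (Fin 2) k)^d - X 1)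
        = ((X 0 : MvPolynomial (Fin 2) k)^d - X 1)^q := by
      rw [← pow_mul, ← pow_succ]; congr 1; omega
    have e3 : (((X 0 : MvPolynomial (Fin 2) k)^d)^(q-1)) * ((X 0 : MvPolynomial (Fin 2) k)^d)
        = ((X 0 : MvPolynomial (Fin 2) k)^d)^q := by
      rw [← pow_succ]; congr 1; omega
    rw [ht]
    linear_combination e2 + 2 * e1 - 2 * e3
  -- power series part
  have coeRH : ∀ φ : MvPolynomial (Fin 2) k,
      (φ : MvPowerSeries (Fin 2) k) = coeToMvPowerSeries.ringHom φ := fun _ => rfl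
  have C1 : ((pderiv 1 g : MvPolynomial (Fin 2) k) : MvPowerSeries (Fin 2) k)
      = -(((MvPowerSeries.X 0 : MvPowerSeries (Fin 2) k)^d - MvPowerSeries.X 1)^q
        + ((MvPowerSeries.X 0 : MvPowerSeries (Fin 2) k)^d - MvPowerSeries.X 1)
          * (((MvPowerSeries.X 0 : MvPowerSeries (Fin 2) k)^d - MvPowerSeries.X 1)^2
            - 4*((MvPowerSeries.X 0 : MvPowerSeries (Fin 2) k)^d))^(m-1)) := by
    rw [coeRH, D1]
    simp only [map_neg, map_add, map_sub, map_mul, map_pow, map_ofNat,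
      coeToMvPowerSeries.ringHom_apply, coe_X]
  have C0 : ((pderiv 0 g : MvPolynomial (Fin 2) k) : MvPowerSeries (Fin 2) k)
      = (MvPowerSeries.X 0 : MvPowerSeries (Fin 2) k)^(d-1)
        * ((((MvPowerSeries.X 0 : MvPowerSeries (Fin 2) k)^d - MvPowerSeries.X 1)^q
          + ((MvPowerSeries.X 0 : MvPowerSeries (Fin 2) k)^d - MvPowerSeries.X 1)
            * (((MvPowerSeries.X 0 : MvPowerSeries (Fin 2) k)^d - MvPowerSeries.X 1)^2
              - 4*((MvPowerSeries.X 0 : MvPowerSeries (Fin 2) k)^d))^(m-1))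
          - 2 - 2 * (((MvPowerSeries.X 0 : MvPowerSeries (Fin 2) k)^d - MvPowerSeries.X 1)^2
              - 4*((MvPowerSeries.X 0 : MvPowerSeries (Fin 2) k)^d))^(m-1)) := by
    rw [coeRH, D0]
    simp only [map_neg, map_add, map_sub, map_mul, map_pow, map_ofNat,
      coeToMvPowerSeries.ringHom_apply, coe_X]
  have C2 : (((MvPowerSeries.X 0 : MvPowerSeries (Fin 2) k)^d - MvPowerSeries.X 1)^q
        + ((MvPowerSeries.X 0 : MvPowerSeries (Fin 2) k)^d - MvPowerSeries.X 1)
          * (((MvPowerSeries.X 0 : MvPowerSeries (Fin 2) k)^d - MvPowerSeries.X 1)^2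
            - 4*((MvPowerSeries.X 0 : MvPowerSeries (Fin 2) k)^d))^(m-1))
      = -2 * (MvPowerSeries.X 1 : MvPowerSeries (Fin 2) k)^q
        + (MvPowerSeries.X 0 : MvPowerSeries (Fin 2) k)^d
          * (2*(((MvPowerSeries.X 0 : MvPowerSeries (Fin 2) k)^d))^(q-1)
            + ((MvPowerSeries.X 0 : MvPowerSeries (Fin 2) k)^d - MvPowerSeries.X 1)
              * (t : MvPowerSeries (Fin 2) k)) := by
    have := congrArg (coeToMvPowerSeries.ringHom :
      MvPolynomial (Fin 2) k →+* MvPowerSeries (Fin 2) k) key2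
    simpa only [map_neg, map_add, map_sub, map_mul, map_pow, map_ofNat,
      coeToMvPowerSeries.ringHom_apply, coe_X] using this
  -- the unit
  have hW0 : MvPowerSeries.constantCoeff
      ((((MvPowerSeries.X 0 : MvPowerSeries (Fin 2) k)^d - MvPowerSeries.X 1)^2
        - 4*((MvPowerSeries.X 0 : MvPowerSeries (Fin 2) k)^d))^(m-1)) = 0 := by
    simp only [map_pow, map_sub, map_mul, map_ofNat, MvPowerSeries.constantCoeff_X]
    rw [zero_pow (by omega : d ≠ 0)]
    have h00 : ((0:k) - 0)^2 - 4*0 = 0 := by ring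
    rw [h00]
    exact zero_pow (by omega : m - 1 ≠ 0)
  -- abbreviate
  set XS : MvPowerSeries (Fin 2) k := MvPowerSeries.X 0 with hXS
  set YS : MvPowerSeries (Fin 2) k := MvPowerSeries.X 1 with hYS
  set U : MvPowerSeries (Fin 2) k := XS^d - YS with hUdef
  set W : MvPowerSeries (Fin 2) k := (U^2 - 4*XS^d)^(m-1) with hWdef
  set F : MvPowerSeries (Fin 2) k := U^q + U*W with hFdef
  set E : MvPowerSeries (Fin 2) k := 2*(XS^d)^(q-1) + U*(t : MvPowerSeries (Fin 2) k) with hEdef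
  set Gx : MvPowerSeries (Fin 2) k :=
    ((pderiv 0 g : MvPolynomial (Fin 2) k) : MvPowerSeries (Fin 2) k) with hGxdef
  set Gy : MvPowerSeries (Fin 2) k :=
    ((pderiv 1 g : MvPolynomial (Fin 2) k) : MvPowerSeries (Fin 2) k) with hGydef
  -- units
  have hu1 : IsUnit (-(2:MvPowerSeries (Fin 2) k) - 2*W) := by
    rw [MvPowerSeries.isUnit_iff_constantCoeff]
    simp only [map_sub, map_neg, map_mul, map_ofNat, hW0, mul_zero, sub_zero]
    exact isUnit_iff_ne_zero.mpr (neg_ne_zero.mpr h2k)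
  have hu2 : IsUnit (2 : MvPowerSeries (Fin 2) k) := by
    rw [MvPowerSeries.isUnit_iff_constantCoeff, map_ofNat]
    exact isUnit_iff_ne_zero.mpr h2k
  have hXd : XS^(d-1) * XS = XS^d := by rw [← pow_succ]; congr 1; omega
  have hAI : XS^(d-1) ∈ Ideal.span {Gx, Gy} := by
    obtain ⟨vu, hvu⟩ := hu1
    have hid : Gx + XS^(d-1) * Gy = (-(2:MvPowerSeries (Fin 2) k) - 2*W) * XS^(d-1) := by
      rw [C0, C1]; ring
    have hfin : (↑vu⁻¹ : MvPowerSeries (Fin 2) k) * (Gx + XS^(d-1)*Gy) = XS^(d-1) := by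
      rw [hid, ← hvu, ← mul_assoc, Units.inv_mul, one_mul]
    rw [← hfin]
    exact Ideal.mul_mem_left _ _ (add_mem (Ideal.subset_span (Set.mem_insert _ _))
      (Ideal.mul_mem_left _ _ (Ideal.subset_span (Set.mem_insert_of_mem _ rfl))))
  have hBI : YS^q ∈ Ideal.span {Gx, Gy} := by
    obtain ⟨w2, hw2⟩ := hu2
    have hid : XS^d * E + Gy = 2 * YS^q := by
      rw [C1, C2]; ring
    have hfin : (↑w2⁻¹ : MvPowerSeries (Fin 2) k) * (XS^d * E + Gy) = YS^q := by
      rw [hid, ← hw2, ← mul_assoc, Units.inv_mul, one_mul]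
    have hmem : XS^d * E ∈ Ideal.span {Gx, Gy} := by
      rw [← hXd, mul_assoc]
      exact Ideal.mul_mem_right _ _ hAI
    rw [← hfin]
    exact Ideal.mul_mem_left _ _ (add_mem hmem
      (Ideal.subset_span (Set.mem_insert_of_mem _ rfl)))
  have hGxJ : Gx ∈ Ideal.span {XS^(d-1), YS^q} := by
    rw [C0]
    exact Ideal.mul_mem_right _ _ (Ideal.subset_span (Set.mem_insert _ _))
  have hGyJ : Gy ∈ Ideal.span {XS^(d-1), YS^q} := by
    have hid : Gy = YS^q * 2 - XS^d * E := by
      rw [C1, C2]; ring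
    have hmem : XS^d * E ∈ Ideal.span {XS^(d-1), YS^q} := by
      rw [← hXd, mul_assoc]
      exact Ideal.mul_mem_right _ _ (Ideal.subset_span (Set.mem_insert _ _))
    rw [hid]
    exact sub_mem (Ideal.mul_mem_right _ _ (Ideal.subset_span (Set.mem_insert_of_mem _ rfl)))
      hmem
  have hspan : Ideal.span {Gx, Gy} = Ideal.span {XS^(d-1), YS^q} := by
    apply le_antisymm <;> rw [Ideal.span_le] <;> rintro z hz <;>
      simp only [Set.mem_insert_iff, Set.mem_singleton_iff] at hz
    · rcases hz with rfl | rfl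
      · exact hGxJ
      · exact hGyJ
    · rcases hz with rfl | rfl
      · exact hAI
      · exact hBI
  rw [hspan, hXS, hYS, dim_quot (d-1) q, hd]
  have : q ^ 2 + q + 1 - 1 = q^2 + q := by omega
  rw [this]
  ring
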